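/- Let a, b be positive integers with a < b and gcd(a,b) = 1, let q = b div a, and let A : ℤ² → ℤ² be the linear map A(x,y) = (x, q·x + y). Then C_{a,b} = A(S_{a, b mod a}) and S_{a,b} = (A(S_{a, b mod a}) + {(0,0), (0,−1), …, (0,−q+1)}) ∪ (A(C_{a, b mod a}) + {(0,−q)}), where + denotes Minkowski sum of subsets of ℤ². -/
import Mathlib


/-- Membership of a lattice point `z` in the half-plane
`H^σ_{a,b,r} = {x ∈ ℝ² : 0 ≤ σ·((b/a)·x₁ − x₂ + r)}`. -/
def inH (a b σ : ℤ) (r : ℝ) (z : ℤ × ℤ) : Prop :=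
  0 ≤ (σ : ℝ) * ((b : ℝ) / (a : ℝ) * (z.1 : ℝ) - (z.2 : ℝ) + r)

/-- The staircase `S^σ_{a,b,r}`. -/
def stair (a b σ : ℤ) (r : ℝ) : Set (ℤ × ℤ) :=
  {z | inH a b σ r z ∧
    (¬ inH a b σ r (z.1 - σ, z.2) ∨ ¬ inH a b σ r (z.1, z.2 + σ))}

/-- The set of corners `C^σ_{a,b,r}`. -/
def corner (a b σ : ℤ) (r : ℝ) : Set (ℤ × ℤ) :=
  {z | inH a b σ r z ∧
    (¬ inH a b σ r (z.1 - σ, z.2) ∧ ¬ inH a b σ r (z.1, z.2 + σ))}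

/-- The column `col_x(A)` of a set `A ⊆ ℤ²`. -/
def col (x : ℤ) (A : Set (ℤ × ℤ)) : Set (ℤ × ℤ) := {p ∈ A | p.1 = x}

lemma inH_iff (a b : ℤ) (ha : 0 < a) (z : ℤ × ℤ) :
    inH a b 1 0 z ↔ a * z.2 ≤ b * z.1 := by
  have ha' : (0:ℝ) < (a:ℝ) := by exact_mod_cast ha
  unfold inH
  rw [Int.cast_one, one_mul, add_zero, sub_nonneg, div_mul_eq_mul_div,
    le_div_iff₀ ha', show (z.2:ℝ) * (a:ℝ) = ((a * z.2 : ℤ) : ℝ) by push_cast; ring,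
    show (b:ℝ) * (z.1:ℝ) = ((b * z.1 : ℤ) : ℝ) by push_cast; ring, Int.cast_le]

lemma key_le (a u v w : ℤ) (ha : 0 < a) (h0 : 0 ≤ w) (h1 : w < a) :
    a * u ≤ a * v + w ↔ u ≤ v := by
  constructor
  · intro h
    by_contra hcon
    push_neg at hcon
    have h2 : a * (v + 1) ≤ a * u := mul_le_mul_of_nonneg_left (by omega) ha.le
    nlinarith
  · intro h
    have h2 : a * u ≤ a * v := mul_le_mul_of_nonneg_left h ha.le
    omega

lemma key_lt (a u v w : ℤ) (ha : 0 < a) (h0 : 0 ≤ w) (h1 : w < a) :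
    a * v + w < a * u ↔ v < u := by
  constructor
  · intro h
    by_contra hcon
    push_neg at hcon
    have h2 : a * u ≤ a * v := mul_le_mul_of_nonneg_left hcon ha.le
    omega
  · intro h
    have h2 : a * (v + 1) ≤ a * u := mul_le_mul_of_nonneg_left (by omega) ha.le
    nlinarith

lemma mem_stair_iff (a b : ℤ) (ha : 0 < a) (x y : ℤ) :
    (x, y) ∈ stair a b 1 0 ↔
      a * y ≤ b * x ∧ (b * (x - 1) < a * y ∨ b * x < a * (y + 1)) := by
  simp only [stair, Set.mem_setOf_eq, inH_iff a b ha, not_le]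

lemma mem_corner_iff (a b : ℤ) (ha : 0 < a) (x y : ℤ) :
    (x, y) ∈ corner a b 1 0 ↔
      a * y ≤ b * x ∧ b * (x - 1) < a * y ∧ b * x < a * (y + 1) := by
  simp only [corner, Set.mem_setOf_eq, inH_iff a b ha, not_le]

open Pointwise in
theorem stmt11 (a b : ℤ) (ha : 0 < a) (hab : a < b) (hg : Int.gcd a b = 1) :
    corner a b 1 0 =
      (fun z : ℤ × ℤ => (z.1, b / a * z.1 + z.2)) '' stair a (b % a) 1 0 ∧
    stair a b 1 0 =
      ((fun z : ℤ × ℤ => (z.1, b / a * z.1 + z.2)) '' stair a (b % a) 1 0 +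
        {w : ℤ × ℤ | w.1 = 0 ∧ -(b / a) + 1 ≤ w.2 ∧ w.2 ≤ 0}) ∪
      ((fun z : ℤ × ℤ => (z.1, b / a * z.1 + z.2)) '' corner a (b % a) 1 0 +
        ({((0 : ℤ), -(b / a))} : Set (ℤ × ℤ))) := by
  set q := b / a with hqdef
  set r := b % a with hrdef
  have hb : b = a * q + r := by rw [hqdef, hrdef]; rw [Int.mul_ediv_add_emod b a]
  have hr0 : 0 ≤ r := Int.emod_nonneg b (by omega)
  have hra : r < a := Int.emod_lt_of_pos b ha
  have hq1 : 1 ≤ q := by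
    rw [hqdef, Int.le_ediv_iff_mul_le ha]; omega
  -- per-point characterizations
  have main : ∀ x : ℤ, ∃ c m : ℤ,
      (∀ y, ((x, y) ∈ corner a b 1 0 ↔ y = c)) ∧
      (∀ y, ((x, y) ∈ (fun z : ℤ × ℤ => (z.1, q * z.1 + z.2)) '' stair a r 1 0 ↔ y = c)) ∧
      (∀ y, ((x, y) ∈ (fun z : ℤ × ℤ => (z.1, q * z.1 + z.2)) '' corner a r 1 0 ↔
        (y = c ∧ m < r))) ∧
      (∀ y, ((x, y) ∈ stair a b 1 0 ↔
        (y ≤ c ∧ (if r ≤ m then c - q + 1 ≤ y else c - q ≤ y)))) := by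
    intro x
    obtain ⟨t', m, hc, hm0, hma⟩ : ∃ t' m, r * x = a * t' + m ∧ 0 ≤ m ∧ m < a :=
      ⟨r * x / a, r * x % a, (Int.mul_ediv_add_emod (r*x) a).symm,
        Int.emod_nonneg _ (by omega), Int.emod_lt_of_pos _ ha⟩
    have hbx : b * x = a * (q * x + t') + m := by linear_combination x * hb + hc
    have hA1 : ∀ y : ℤ, (a * y ≤ b * x ↔ y ≤ q * x + t') := fun y => by
      rw [hbx, key_le a y (q * x + t') m ha hm0 hma]
    have hA2 : ∀ y : ℤ, (b * x < a * (y + 1) ↔ q * x + t' ≤ y) := fun y => by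
      rw [hbx, key_lt a (y + 1) (q * x + t') m ha hm0 hma]; omega
    have hA3 : ∀ y : ℤ, (b * (x - 1) < a * y ↔
        (if r ≤ m then q * x + t' - q < y else q * x + t' - q ≤ y)) := fun y => by
      rcases le_or_gt r m with h | h
      · have e : b * (x - 1) = a * (q * x + t' - q) + (m - r) := by
          linear_combination (x - 1) * hb + hc
        rw [e, key_lt a y (q * x + t' - q) (m - r) ha (by omega) (by omega), if_pos h]
      · have e : b * (x - 1) = a * (q * x + t' - q - 1) + (a + m - r) := by
          linear_combination (x - 1) * hb + hc
        rw [e, key_lt a y (q * x + t' - q - 1) (a + m - r) ha (by omega) (by omega),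
          if_neg (not_le.mpr h)]
        omega
    have hB1 : ∀ t : ℤ, (a * t ≤ r * x ↔ t ≤ t') := fun t => by
      rw [hc, key_le a t t' m ha hm0 hma]
    have hB2 : ∀ t : ℤ, (r * x < a * (t + 1) ↔ t' ≤ t) := fun t => by
      rw [hc, key_lt a (t + 1) t' m ha hm0 hma]; omega
    have hB3 : ∀ t : ℤ, (r * (x - 1) < a * t ↔
        (if r ≤ m then t' < t else t' ≤ t)) := fun t => by
      rcases le_or_gt r m with h | h
      · have e : r * (x - 1) = a * t' + (m - r) := by linear_combination hc
        rw [e, key_lt a t t' (m - r) ha (by omega) (by omega), if_pos h]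
      · have e : r * (x - 1) = a * (t' - 1) + (a + m - r) := by linear_combination hc
        rw [e, key_lt a t (t' - 1) (a + m - r) ha (by omega) (by omega),
          if_neg (not_le.mpr h)]
        omega
    refine ⟨q * x + t', m, ?_, ?_, ?_, ?_⟩
    · -- corner a b
      intro y
      rw [mem_corner_iff a b ha, hA1 y, hA2 y, hA3 y]
      split_ifs <;> omega
    · -- image of stair a r
      intro y
      constructor
      · rintro ⟨⟨x0, t⟩, hp, he⟩
        simp only [Prod.mk.injEq] at he
        obtain ⟨rfl, rfl⟩ := he
        rw [mem_stair_iff a r ha, hB1 t, hB2 t, hB3 t] at hp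
        have ht : t = t' := by split_ifs at hp <;> omega
        rw [ht]
      · intro hy
        refine ⟨(x, t'), ?_, by simp [hy]⟩
        rw [mem_stair_iff a r ha, hB1 t', hB2 t', hB3 t']
        split_ifs <;> omega
    · -- image of corner a r
      intro y
      constructor
      · rintro ⟨⟨x0, t⟩, hp, he⟩
        simp only [Prod.mk.injEq] at he
        obtain ⟨rfl, rfl⟩ := he
        rw [mem_corner_iff a r ha, hB1 t, hB2 t, hB3 t] at hp
        have ht : t = t' ∧ m < r := by split_ifs at hp <;> omega
        exact ⟨by rw [ht.1], ht.2⟩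
      · rintro ⟨hy, hmr⟩
        refine ⟨(x, t'), ?_, by simp [hy]⟩
        rw [mem_corner_iff a r ha, hB1 t', hB2 t', hB3 t']
        split_ifs <;> omega
    · -- stair a b
      intro y
      rw [mem_stair_iff a b ha, hA1 y, hA2 y, hA3 y]
      split_ifs <;> omega
  constructor
  · ext ⟨x, y⟩
    obtain ⟨c, m, h1, h2, h3, h4⟩ := main x
    rw [h1 y, h2 y]
  · ext ⟨x, y⟩
    obtain ⟨c, m, h1, h2, h3, h4⟩ := main x
    rw [h4 y]
    simp only [Set.mem_union, Set.mem_add, Set.mem_setOf_eq, Set.mem_singleton_iff]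
    constructor
    · rintro ⟨hyc, hif⟩
      by_cases hcase : c - q + 1 ≤ y
      · left
        exact ⟨(x, c), (h2 c).mpr rfl, (0, y - c), ⟨rfl, by omega, by omega⟩,
          by simp⟩
      · right
        have hm : ¬ (r ≤ m) := by
          intro h; rw [if_pos h] at hif; omega
        rw [if_neg hm] at hif
        have hy : y = c - q := by omega
        exact ⟨(x, c), (h3 c).mpr ⟨rfl, by omega⟩, (0, -q), rfl,
          by simp only [Prod.mk_add_mk, Prod.mk.injEq]; omega⟩
    · rintro (⟨⟨p1, p2⟩, hp, ⟨w1, w2⟩, ⟨hw1, hw2, hw3⟩, he⟩ |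
        ⟨⟨p1, p2⟩, hp, ⟨w1, w2⟩, hw, he⟩)
      · simp only [Prod.mk.injEq, Prod.mk_add_mk] at he hw1
        obtain ⟨he1, he2⟩ := he
        have hp1 : p1 = x := by omega
        subst hp1
        have hp2 : p2 = c := (h2 p2).mp hp
        subst hp2
        constructor <;> [omega; skip]
        split_ifs <;> omega
      · simp only [Prod.mk.injEq, Prod.mk_add_mk] at he hw
        obtain ⟨he1, he2⟩ := he
        obtain ⟨hw1, hw2⟩ := hw
        have hp1 : p1 = x := by omega
        subst hp1
        obtain ⟨hp2, hmr⟩ := (h3 p2).mp hp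
        subst hp2
        constructor <;> [omega; skip]
        split_ifs <;> omega
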